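/- Let h ≥ 1 and n be integers with 0 ≤ n ≤ h, and let X be a real number with log X ≥ h³·e^{γ+1}, where γ is the Euler–Mascheroni constant. For each integer t ≥ 1 set S_t = Σ ((−1)^{k₁+k₂+⋯+k_t})/(k₁!·k₂!⋯k_t!) · γ^{k₁}·(ζ(2)/2)^{k₂}·(ζ(3)/3)^{k₃}⋯(ζ(t)/t)^{k_t}, the sum ranging over all t-tuples (k₁, …, k_t) of nonnegative integers with k₁ + 2k₂ + ⋯ + t·k_t = t. Then the complex number (log X)^{n} + Σ_{t=1}^{n} (n!/(n−t)!)·(log X)^{n−t}·S_t is a positive real number: its imaginary part is zero and its real part is strictly positive. -/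

import Mathlib

open Finset

noncomputable def St (t : ℕ) : ℂ :=
  ∑ k ∈ Finset.filter (fun k : Fin t → ℕ => ∑ j : Fin t, ((j : ℕ) + 1) * k j = t)
      (Fintype.piFinset fun _ => Finset.range (t + 1)),
    ((-1 : ℂ) ^ (∑ j, k j)) / (∏ j, ((k j).factorial : ℂ)) *
      ∏ j : Fin t,
        (if (j : ℕ) = 0 then (Real.eulerMascheroniConstant : ℂ)
          else riemannZeta ((j : ℕ) + 1) / ((j : ℕ) + 1)) ^ (k j)

/-- real zeta values -/
noncomputable def zr (k : ℕ) : ℝ := ∑' n : ℕ, 1 / (n : ℝ) ^ k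

lemma zeta_eq_zr {k : ℕ} (hk : 1 < k) : riemannZeta k = ((zr k : ℝ) : ℂ) := by
  rw [zeta_nat_eq_tsum_of_gt_one hk, zr, Complex.ofReal_tsum]
  exact tsum_congr fun n => by push_cast; ring

lemma zr_nonneg (k : ℕ) : 0 ≤ zr k :=
  tsum_nonneg fun n => by positivity

lemma zr_two : zr 2 = Real.pi ^ 2 / 6 := by
  have h := riemannZeta_two
  rw [show (2 : ℂ) = ((2 : ℕ) : ℂ) by norm_num, zeta_eq_zr (by norm_num)] at h
  exact_mod_cast h

lemma zr_le {k : ℕ} (hk : 2 ≤ k) : zr k ≤ zr 2 := by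
  refine Summable.tsum_le_tsum (fun n => ?_) (Real.summable_one_div_nat_pow.mpr (by omega))
    (Real.summable_one_div_nat_pow.mpr (by norm_num))
  rcases Nat.eq_zero_or_pos n with rfl | hn
  · rw [Nat.cast_zero, zero_pow (by omega : k ≠ 0)]
    norm_num
  · have h1 : (1 : ℝ) ≤ (n : ℝ) := by exact_mod_cast hn
    exact one_div_le_one_div_of_le (by positivity) (pow_le_pow_right₀ h1 hk)

/-- the real factors -/
noncomputable def ar (j : ℕ) : ℝ :=
  if j = 0 then Real.eulerMascheroniConstant else zr (j + 1) / (j + 1)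

lemma ar_nonneg (j : ℕ) : 0 ≤ ar j := by
  unfold ar
  split
  · linarith [Real.one_half_lt_eulerMascheroniConstant]
  · exact div_nonneg (zr_nonneg _) (by positivity)

lemma ar_le (j : ℕ) : ar j ≤ 17 / 20 := by
  unfold ar
  split
  · linarith [Real.eulerMascheroniConstant_lt_two_thirds]
  · rename_i hj
    have hj1 : 1 ≤ j := Nat.one_le_iff_ne_zero.mpr hj
    have h2 : zr (j + 1) ≤ Real.pi ^ 2 / 6 := zr_two ▸ zr_le (by omega)
    have hpi : Real.pi < 3.15 := Real.pi_lt_d2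
    have hpi0 : 0 < Real.pi := Real.pi_pos
    have hz : zr (j + 1) ≤ 10.2 / 6 := le_trans h2 (by nlinarith)
    have hjr : (2 : ℝ) ≤ (j : ℝ) + 1 := by exact_mod_cast by omega
    calc zr (j + 1) / ((j : ℝ) + 1) ≤ zr (j + 1) / 2 :=
          div_le_div_of_nonneg_left (zr_nonneg _) two_pos hjr |>.trans le_rfl
      _ ≤ (10.2 / 6) / 2 := by linarith
      _ ≤ 17 / 20 := by norm_num

/-- real version of `St` -/
noncomputable def Sr (t : ℕ) : ℝ :=
  ∑ k ∈ Finset.filter (fun k : Fin t → ℕ => ∑ j : Fin t, ((j : ℕ) + 1) * k j = t)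
      (Fintype.piFinset fun _ => Finset.range (t + 1)),
    ((-1 : ℝ) ^ (∑ j, k j)) / (∏ j, ((k j).factorial : ℝ)) *
      ∏ j : Fin t, (ar (j : ℕ)) ^ (k j)

lemma St_eq (t : ℕ) : St t = ((Sr t : ℝ) : ℂ) := by
  rw [St, Sr, Complex.ofReal_sum]
  refine Finset.sum_congr rfl fun k _ => ?_
  have h2 : ∀ j : Fin t, (if (j : ℕ) = 0 then (Real.eulerMascheroniConstant : ℂ)
      else riemannZeta ((j : ℕ) + 1) / ((j : ℕ) + 1)) = ((ar (j : ℕ) : ℝ) : ℂ) := by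
    intro j
    by_cases hj : (j : ℕ) = 0
    · simp [ar, hj]
    · have hz := zeta_eq_zr (k := (j : ℕ) + 1) (by omega)
      push_cast at hz
      simp only [ar, hj, if_neg, if_false]
      rw [Complex.ofReal_div, ← hz]
      push_cast
      ring
  simp only [h2]
  push_cast
  ring

lemma Sr_abs (t : ℕ) : |Sr t| ≤ Real.exp (17 / 20 * t) := by
  have habs : |Sr t| ≤
      ∑ k ∈ Finset.filter (fun k : Fin t → ℕ => ∑ j : Fin t, ((j : ℕ) + 1) * k j = t)
        (Fintype.piFinset fun _ => Finset.range (t + 1)),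
      ∏ j : Fin t, (ar (j : ℕ)) ^ (k j) / ((k j).factorial : ℝ) := by
    refine le_trans (Finset.abs_sum_le_sum_abs _ _) (Finset.sum_le_sum fun k _ => ?_)
    have heq : |(-1 : ℝ) ^ (∑ j, k j) / (∏ j, ((k j).factorial : ℝ)) *
        ∏ j : Fin t, (ar (j : ℕ)) ^ (k j)|
        = ∏ j : Fin t, (ar (j : ℕ)) ^ (k j) / ((k j).factorial : ℝ) := by
      rw [abs_mul, abs_div, abs_pow, abs_neg, abs_one, one_pow,
        abs_of_nonneg (by positivity : (0:ℝ) ≤ ∏ j, ((k j).factorial : ℝ)),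
        abs_of_nonneg (Finset.prod_nonneg fun j _ => pow_nonneg (ar_nonneg _) (k j)),
        Finset.prod_div_distrib]
      ring
    rw [heq]
  refine habs.trans ?_
  have hsub : ∑ k ∈ Finset.filter (fun k : Fin t → ℕ => ∑ j : Fin t, ((j : ℕ) + 1) * k j = t)
        (Fintype.piFinset fun _ => Finset.range (t + 1)),
      ∏ j : Fin t, (ar (j : ℕ)) ^ (k j) / ((k j).factorial : ℝ) ≤
      ∑ k ∈ Fintype.piFinset (fun _ : Fin t => Finset.range (t + 1)),
      ∏ j : Fin t, (ar (j : ℕ)) ^ (k j) / ((k j).factorial : ℝ) := by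
    refine Finset.sum_le_sum_of_subset_of_nonneg (Finset.filter_subset _ _) fun k _ _ => ?_
    exact Finset.prod_nonneg fun j _ => div_nonneg (pow_nonneg (ar_nonneg _) _) (by positivity)
  refine hsub.trans ?_
  have hps : ∏ j : Fin t, ∑ m ∈ Finset.range (t + 1), (ar (j : ℕ)) ^ m / (m.factorial : ℝ)
      = ∑ k ∈ Fintype.piFinset (fun _ : Fin t => Finset.range (t + 1)),
        ∏ j : Fin t, (ar (j : ℕ)) ^ (k j) / ((k j).factorial : ℝ) :=
    Finset.prod_univ_sum _ _
  rw [← hps]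
  calc ∏ j : Fin t, ∑ m ∈ Finset.range (t + 1), (ar (j : ℕ)) ^ m / (m.factorial : ℝ)
      ≤ ∏ j : Fin t, Real.exp (17 / 20) := by
        refine Finset.prod_le_prod (fun j _ => ?_) (fun j _ => ?_)
        · exact Finset.sum_nonneg fun m _ =>
            div_nonneg (pow_nonneg (ar_nonneg _) _) (by positivity)
        · exact le_trans (Real.sum_le_exp_of_nonneg (ar_nonneg _) _)
            (Real.exp_le_exp.mpr (ar_le _))
    _ = Real.exp (17 / 20 * t) := by
        rw [Finset.prod_const, Finset.card_univ, Fintype.card_fin, ← Real.exp_nat_mul]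
        ring_nf

theorem bracket_positive (h n : ℕ) (hh : 1 ≤ h) (hn : n ≤ h) (X : ℝ)
    (hX : (h : ℝ) ^ 3 * Real.exp (Real.eulerMascheroniConstant + 1) ≤ Real.log X) :
    ((Real.log X : ℂ) ^ n +
        ∑ t ∈ Finset.Icc 1 n,
          ((n.factorial : ℂ) / ((n - t).factorial : ℂ)) * (Real.log X : ℂ) ^ (n - t) * St t).im
        = 0 ∧
    0 < ((Real.log X : ℂ) ^ n +
        ∑ t ∈ Finset.Icc 1 n,
          ((n.factorial : ℂ) / ((n - t).factorial : ℂ)) * (Real.log X : ℂ) ^ (n - t) * St t).re := by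
  set γ := Real.eulerMascheroniConstant with hγdef
  set L := Real.log X with hLdef
  -- basic facts
  have hγ : 1 / 2 < γ := Real.one_half_lt_eulerMascheroniConstant
  have hh1 : (1 : ℝ) ≤ (h : ℝ) := by exact_mod_cast hh
  have hh3 : (1 : ℝ) ≤ (h : ℝ) ^ 3 := by simpa using pow_le_pow_left₀ (by norm_num : (0:ℝ) ≤ 1) hh1 3
  have hK : Real.exp (γ + 1) ≤ L := by
    nlinarith [Real.exp_pos (γ + 1)]
  have hL0 : 0 < L := lt_of_lt_of_le (Real.exp_pos _) hK
  -- the real expression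
  set E : ℝ := L ^ n + ∑ t ∈ Finset.Icc 1 n,
      ((n.factorial : ℝ) / ((n - t).factorial : ℝ)) * L ^ (n - t) * Sr t with hEdef
  have hcast : ((Real.log X : ℂ) ^ n +
      ∑ t ∈ Finset.Icc 1 n,
        ((n.factorial : ℂ) / ((n - t).factorial : ℂ)) * (Real.log X : ℂ) ^ (n - t) * St t)
      = (E : ℂ) := by
    rw [hEdef, Complex.ofReal_add, Complex.ofReal_sum, Complex.ofReal_pow]
    congr 1
    refine Finset.sum_congr rfl fun t _ => ?_
    rw [St_eq]
    push_cast
    ring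
  rw [hcast]
  refine ⟨Complex.ofReal_im E, ?_⟩
  rw [Complex.ofReal_re]
  -- positivity of E
  have key : ∀ t ∈ Finset.Icc 1 n,
      |((n.factorial : ℝ) / ((n - t).factorial : ℝ)) * L ^ (n - t) * Sr t|
        ≤ L ^ n * (Real.exp (-(13 / 20)) / (h : ℝ) ^ 2) := by
    intro t ht
    rw [Finset.mem_Icc] at ht
    obtain ⟨ht1, htn⟩ := ht
    have hdf : ((n.factorial : ℝ) / ((n - t).factorial : ℝ)) = (n.descFactorial t : ℝ) := by
      rw [div_eq_iff (Nat.cast_ne_zero.mpr (Nat.factorial_ne_zero _))]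
      exact_mod_cast ((Nat.factorial_mul_descFactorial htn).symm.trans (Nat.mul_comm _ _))
    have hdfle : (n.descFactorial t : ℝ) ≤ (n : ℝ) ^ t := by
      exact_mod_cast Nat.descFactorial_le_pow n t
    have hSr := Sr_abs t
    have habs : |((n.factorial : ℝ) / ((n - t).factorial : ℝ)) * L ^ (n - t) * Sr t|
        ≤ (n : ℝ) ^ t * L ^ (n - t) * Real.exp (17 / 20 * t) := by
      rw [abs_mul, abs_mul, hdf, abs_of_nonneg (by positivity : (0:ℝ) ≤ (n.descFactorial t : ℝ)),
        abs_of_nonneg (by positivity : (0:ℝ) ≤ L ^ (n - t))]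
      have h1 : |Sr t| ≤ Real.exp (17 / 20 * t) := hSr
      have h2 : (0:ℝ) ≤ (n : ℝ) ^ t * L ^ (n - t) := by positivity
      calc (n.descFactorial t : ℝ) * L ^ (n - t) * |Sr t|
          ≤ (n : ℝ) ^ t * L ^ (n - t) * |Sr t| := by
            apply mul_le_mul_of_nonneg_right _ (abs_nonneg _)
            exact mul_le_mul_of_nonneg_right hdfle (by positivity)
        _ ≤ (n : ℝ) ^ t * L ^ (n - t) * Real.exp (17 / 20 * t) :=
            mul_le_mul_of_nonneg_left h1 h2
    refine habs.trans ?_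
    -- (n e^c / L)^t ≤ r, with L^{n-t} * L^t = L^n
    have hnr : (n : ℝ) ≤ (h : ℝ) := by exact_mod_cast hn
    have hLpow : L ^ (n - t) * L ^ t = L ^ n := by
      rw [← pow_add]; congr 1; omega
    have hexp : Real.exp (17 / 20 * t) = (Real.exp (17 / 20)) ^ t := by
      rw [← Real.exp_nat_mul]; ring_nf
    set r : ℝ := (n : ℝ) * Real.exp (17 / 20) / L with hrdef
    have hr0 : 0 ≤ r := by positivity
    have hrle : r ≤ Real.exp (-(13 / 20)) / (h : ℝ) ^ 2 := by
      rw [hrdef, div_le_div_iff₀ hL0 (by positivity)]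
      have h1 : (n : ℝ) * Real.exp (17 / 20) * (h : ℝ) ^ 2
          ≤ (h : ℝ) ^ 3 * Real.exp (17 / 20) := by
        have e0 : (0 : ℝ) ≤ Real.exp (17 / 20) := Real.exp_nonneg _
        nlinarith [mul_le_mul_of_nonneg_right hnr e0, sq_nonneg ((h : ℝ)), hh1]
      refine h1.trans ?_
      have he : Real.exp (17 / 20 : ℝ) = Real.exp (-(13 / 20)) * Real.exp (3 / 2) := by
        rw [← Real.exp_add]; norm_num
      have h2 : (h : ℝ) ^ 3 * Real.exp (17 / 20)
          = Real.exp (-(13 / 20)) * ((h : ℝ) ^ 3 * Real.exp (3 / 2)) := by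
        rw [he]; ring
      rw [h2]
      refine mul_le_mul_of_nonneg_left ?_ (Real.exp_nonneg _)
      calc (h : ℝ) ^ 3 * Real.exp (3 / 2) ≤ (h : ℝ) ^ 3 * Real.exp (γ + 1) := by
            refine mul_le_mul_of_nonneg_left (Real.exp_le_exp.mpr (by linarith)) (by positivity)
        _ ≤ L := hX
    have hr1 : r ≤ 1 := by
      refine hrle.trans ?_
      have : Real.exp (-(13 / 20 : ℝ)) < 1 := Real.exp_lt_one_iff.mpr (by norm_num)
      have hh2 : (1 : ℝ) ≤ (h : ℝ) ^ 2 := by simpa using pow_le_pow_left₀ (by norm_num : (0:ℝ) ≤ 1) hh1 2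
      calc Real.exp (-(13 / 20 : ℝ)) / (h : ℝ) ^ 2 ≤ Real.exp (-(13 / 20 : ℝ)) / 1 :=
            div_le_div_of_nonneg_left (Real.exp_nonneg _) one_pos hh2
        _ ≤ 1 := by rw [div_one]; linarith
    calc (n : ℝ) ^ t * L ^ (n - t) * Real.exp (17 / 20 * t)
        = L ^ n * r ^ t := by
          rw [hexp, hrdef, div_pow, mul_pow, ← hLpow]
          field_simp
      _ ≤ L ^ n * r ^ 1 := by
          refine mul_le_mul_of_nonneg_left (pow_le_pow_of_le_one hr0 hr1 ht1) (by positivity)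
      _ ≤ L ^ n * (Real.exp (-(13 / 20)) / (h : ℝ) ^ 2) := by
          rw [pow_one]
          exact mul_le_mul_of_nonneg_left hrle (by positivity)
  -- sum bound
  have hsum : |∑ t ∈ Finset.Icc 1 n,
      ((n.factorial : ℝ) / ((n - t).factorial : ℝ)) * L ^ (n - t) * Sr t| < L ^ n := by
    refine lt_of_le_of_lt (Finset.abs_sum_le_sum_abs _ _) ?_
    refine lt_of_le_of_lt (Finset.sum_le_sum key) ?_
    rw [Finset.sum_const, Nat.card_Icc, Nat.add_sub_cancel, nsmul_eq_mul]
    have hnr : (n : ℝ) ≤ (h : ℝ) := by exact_mod_cast hn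
    have hexp1 : Real.exp (-(13 / 20 : ℝ)) < 1 := Real.exp_lt_one_iff.mpr (by norm_num)
    have hLn : (0 : ℝ) < L ^ n := by positivity
    have : (n : ℝ) * (Real.exp (-(13 / 20)) / (h : ℝ) ^ 2) < 1 := by
      rw [← mul_div_assoc, div_lt_one (by positivity)]
      have hn0 : (0 : ℝ) ≤ (n : ℝ) := Nat.cast_nonneg n
      have hp : (0 : ℝ) < (h : ℝ) := lt_of_lt_of_le one_pos hh1
      nlinarith [mul_le_mul_of_nonneg_right hnr (Real.exp_pos (-(13 / 20 : ℝ))).le,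
        mul_lt_mul_of_pos_left hexp1 hp, mul_le_mul_of_nonneg_left hh1 hp.le]
    calc (n : ℝ) * (L ^ n * (Real.exp (-(13 / 20)) / (h : ℝ) ^ 2))
        = L ^ n * ((n : ℝ) * (Real.exp (-(13 / 20)) / (h : ℝ) ^ 2)) := by ring
      _ < L ^ n * 1 := by exact mul_lt_mul_of_pos_left this hLn
      _ = L ^ n := mul_one _
  have := abs_lt.mp hsum
  rw [hEdef]
  linarith [this.1]
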